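/- arXiv:2506.19555 — 3 statements merged into one kernel-verified Lean document; each statement's English description precedes it below -/
import Mathlib

section
/- (Poincaré–Miranda theorem in two variables.) Let F, G : [a₁, a₂] × [t₁, t₂] → ℝ be continuous functions. Suppose that (1) F(a, t₁) > 0 and F(a, t₂) < 0 for all a ∈ [a₁, a₂], and (2) G(a₁, t) < 0 and G(a₂, t) > 0 for all t ∈ [t₁, t₂]. Then there exists a point (a₀, t₀) ∈ [a₁, a₂] × [t₁, t₂] such that F(a₀, t₀) = 0 and G(a₀, t₀) = 0. -/
open Set Finset Filter

lemma zmod2_telescope (x : ℕ → ZMod 2) (n : ℕ) :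
    ∑ j ∈ Finset.range n, (x j + x (j + 1)) = x 0 + x n := by
  induction n with
  | zero => rw [Finset.sum_range_zero, CharTwo.add_self_eq_zero]
  | succ n ih =>
      rw [Finset.sum_range_succ, ih]
      have h : x n + x n = 0 := CharTwo.add_self_eq_zero _
      linear_combination h

set_option synthInstance.maxSize 1000 in
set_option synthInstance.maxHeartbeats 1000000 in
set_option maxHeartbeats 1000000 in
lemma zmod2_cell (x1 x2 x3 x4 y1 y2 y3 y4 : ZMod 2)
    (h : x1*x2*(y1+y2) + x3*x4*(y3+y4) + x1*x3*(y1+y3) + x2*x4*(y2+y4) ≠ 0) :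
    (x1 = 0 ∨ x2 = 0 ∨ x3 = 0 ∨ x4 = 0) ∧ (x1 = 1 ∨ x2 = 1 ∨ x3 = 1 ∨ x4 = 1) ∧
    (y1 = 0 ∨ y2 = 0 ∨ y3 = 0 ∨ y4 = 0) ∧ (y1 = 1 ∨ y2 = 1 ∨ y3 = 1 ∨ y4 = 1) := by
  revert h; revert x1 x2 x3 x4 y1 y2 y3 y4; decide

/-- Discrete (mod 2 degree) Poincaré–Miranda on an `n × n` grid. -/
lemma discrete_pm (n : ℕ) (f g : ℕ → ℕ → ZMod 2)
    (hfb : ∀ i ≤ n, f i 0 = 1) (hft : ∀ i ≤ n, f i n = 0)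
    (hgl : ∀ j ≤ n, g 0 j = 0) (hgr : ∀ j ≤ n, g n j = 1) :
    ∃ i j, i < n ∧ j < n ∧
      (f i j = 0 ∨ f (i+1) j = 0 ∨ f i (j+1) = 0 ∨ f (i+1) (j+1) = 0) ∧
      (f i j = 1 ∨ f (i+1) j = 1 ∨ f i (j+1) = 1 ∨ f (i+1) (j+1) = 1) ∧
      (g i j = 0 ∨ g (i+1) j = 0 ∨ g i (j+1) = 0 ∨ g (i+1) (j+1) = 0) ∧
      (g i j = 1 ∨ g (i+1) j = 1 ∨ g i (j+1) = 1 ∨ g (i+1) (j+1) = 1) := by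
  rcases Nat.eq_zero_or_pos n with rfl | hn
  · exact absurd ((hfb 0 le_rfl).symm.trans (hft 0 le_rfl)) (by decide)
  set B : ℕ → ℕ → ZMod 2 := fun i j => f i j * f (i+1) j * (g i j + g (i+1) j) with hB
  set L : ℕ → ℕ → ZMod 2 := fun i j => f i j * f i (j+1) * (g i j + g i (j+1)) with hL
  set S : ℕ → ℕ → ZMod 2 := fun i j => B i j + B i (j+1) + (L i j + L (i+1) j) with hS
  have hTot : ∑ i ∈ range n, ∑ j ∈ range n, S i j = 1 := by
    have hsplit : ∀ i, ∑ j ∈ range n, S i j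
        = (B i 0 + B i n) + ∑ j ∈ range n, (L i j + L (i+1) j) := by
      intro i
      rw [Finset.sum_add_distrib, zmod2_telescope (fun j => B i j) n]
    calc ∑ i ∈ range n, ∑ j ∈ range n, S i j
        = ∑ i ∈ range n, ((B i 0 + B i n) + ∑ j ∈ range n, (L i j + L (i+1) j)) := by
          exact Finset.sum_congr rfl fun i _ => hsplit i
      _ = ∑ i ∈ range n, (B i 0 + B i n)
          + ∑ j ∈ range n, ∑ i ∈ range n, (L i j + L (i+1) j) := by
          rw [Finset.sum_add_distrib, Finset.sum_comm]
      _ = ∑ i ∈ range n, (B i 0 + B i n) + ∑ j ∈ range n, (L 0 j + L n j) := by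
          congr 1
          exact Finset.sum_congr rfl fun j _ => zmod2_telescope (fun i => L i j) n
      _ = 1 := by
          have h1 : ∀ i ∈ range n, B i 0 + B i n = g i 0 + g (i+1) 0 := by
            intro i hi
            have hi' : i < n := Finset.mem_range.mp hi
            have e1 : B i 0 = g i 0 + g (i+1) 0 := by
              simp only [hB, hfb i hi'.le, hfb (i+1) hi', one_mul]
            have e2 : B i n = 0 := by
              simp only [hB, hft i hi'.le, zero_mul]
            rw [e1, e2, add_zero]
          have h2 : ∀ j ∈ range n, L 0 j + L n j = 0 := by
            intro j hj
            have hj' : j < n := Finset.mem_range.mp hj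
            have e1 : L 0 j = 0 := by
              simp only [hL, hgl j hj'.le, hgl (j+1) hj', add_zero, mul_zero]
            have e2 : L n j = 0 := by
              simp only [hL, hgr j hj'.le, hgr (j+1) hj', CharTwo.add_self_eq_zero, mul_zero]
            rw [e1, e2, add_zero]
          rw [Finset.sum_congr rfl h1, Finset.sum_congr rfl h2, Finset.sum_const_zero, add_zero,
            zmod2_telescope (fun i => g i 0) n, hgl 0 (Nat.zero_le n), hgr 0 (Nat.zero_le n),
            zero_add]
  have hne : ∑ i ∈ range n, ∑ j ∈ range n, S i j ≠ 0 := by rw [hTot]; decide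
  obtain ⟨i, hi, hi2⟩ := Finset.exists_ne_zero_of_sum_ne_zero hne
  obtain ⟨j, hj, hj2⟩ := Finset.exists_ne_zero_of_sum_ne_zero hi2
  have := zmod2_cell (f i j) (f (i+1) j) (f i (j+1)) (f (i+1) (j+1))
      (g i j) (g (i+1) j) (g i (j+1)) (g (i+1) (j+1)) (by
        intro h0; apply hj2
        simp only [hS, hB, hL]
        linear_combination h0)
  exact ⟨i, j, Finset.mem_range.mp hi, Finset.mem_range.mp hj,
    this.1, this.2.1, this.2.2.1, this.2.2.2⟩

lemma pm_aux_mem {c d : ℝ} (hcd : c ≤ d) {N : ℕ} (hN : 0 < N) {i : ℕ} (hi : i ≤ N) :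
    c + i * (d - c) / N ∈ Set.Icc c d := by
  have hN' : (0:ℝ) < N := by exact_mod_cast hN
  have hi' : (i:ℝ) ≤ N := by exact_mod_cast hi
  have h0 : (0:ℝ) ≤ i := Nat.cast_nonneg i
  constructor
  · have : (0:ℝ) ≤ (i:ℝ) * (d - c) / N := div_nonneg (mul_nonneg h0 (by linarith)) hN'.le
    linarith
  · have h2 : (i:ℝ) * (d - c) / N ≤ d - c := by
      rw [div_le_iff₀ hN']; nlinarith
    linarith

lemma pm_aux_dist {c d : ℝ} (hcd : c ≤ d) {N : ℕ} (hN : 0 < N) (i i' : ℕ)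
    (h1 : i ≤ i') (h2 : i' ≤ i + 1) :
    |(c + i' * (d - c) / N) - (c + i * (d - c) / N)| ≤ (d - c) / N := by
  have hN' : (0:ℝ) < N := by exact_mod_cast hN
  have hi1 : (i:ℝ) ≤ i' := by exact_mod_cast h1
  have hi2 : (i':ℝ) ≤ i + 1 := by exact_mod_cast h2
  have he : (c + i' * (d - c) / N) - (c + i * (d - c) / N) = ((i':ℝ) - i) * (d - c) / N := by
    ring
  rw [he, abs_of_nonneg (div_nonneg (mul_nonneg (by linarith) (by linarith)) hN'.le)]
  have h3 : ((i':ℝ) - i) * (d - c) ≤ d - c := by nlinarith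
  exact (div_le_div_iff_of_pos_right hN').mpr h3

/-- Poincaré–Miranda theorem in two variables. -/
theorem poincare_miranda_two_var (a₁ a₂ t₁ t₂ : ℝ) (ha : a₁ < a₂) (ht : t₁ < t₂)
    (F G : ℝ × ℝ → ℝ)
    (hF : ContinuousOn F (Icc a₁ a₂ ×ˢ Icc t₁ t₂))
    (hG : ContinuousOn G (Icc a₁ a₂ ×ˢ Icc t₁ t₂))
    (hF₁ : ∀ a ∈ Icc a₁ a₂, 0 < F (a, t₁))
    (hF₂ : ∀ a ∈ Icc a₁ a₂, F (a, t₂) < 0)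
    (hG₁ : ∀ t ∈ Icc t₁ t₂, G (a₁, t) < 0)
    (hG₂ : ∀ t ∈ Icc t₁ t₂, 0 < G (a₂, t)) :
    ∃ p ∈ Icc a₁ a₂ ×ˢ Icc t₁ t₂, F p = 0 ∧ G p = 0 := by
  have ha' : a₁ ≤ a₂ := ha.le
  have ht' : t₁ ≤ t₂ := ht.le
  set K := Icc a₁ a₂ ×ˢ Icc t₁ t₂ with hKdef
  have hKc : IsCompact K := isCompact_Icc.prod isCompact_Icc
  set C : ℝ := max (a₂ - a₁) (t₂ - t₁) with hC
  have hC1 : a₂ - a₁ ≤ C := le_max_left _ _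
  have hC2 : t₂ - t₁ ≤ C := le_max_right _ _
  have main : ∀ n : ℕ, ∃ p u v w z : ℝ × ℝ, p ∈ K ∧ u ∈ K ∧ v ∈ K ∧ w ∈ K ∧ z ∈ K ∧
      dist u p ≤ C / (n+1) ∧ dist v p ≤ C / (n+1) ∧ dist w p ≤ C / (n+1) ∧
      dist z p ≤ C / (n+1) ∧ 0 < F u ∧ F v ≤ 0 ∧ 0 < G w ∧ G z ≤ 0 := by
    intro n
    set N := n + 1 with hNdef
    have hN0 : 0 < N := Nat.succ_pos n
    have hN' : (0:ℝ) < N := by exact_mod_cast hN0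
    have hNcast : (N:ℝ) = (n:ℝ) + 1 := by rw [hNdef]; push_cast; ring
    set P : ℕ → ℕ → ℝ × ℝ :=
      fun i j => (a₁ + i * (a₂ - a₁) / N, t₁ + j * (t₂ - t₁) / N) with hP
    have hPmem : ∀ {i j}, i ≤ N → j ≤ N → P i j ∈ K := by
      intro i j hi hj
      exact ⟨pm_aux_mem ha' hN0 hi, pm_aux_mem ht' hN0 hj⟩
    have hPdist : ∀ i j i' j', i ≤ i' → i' ≤ i + 1 → j ≤ j' → j' ≤ j + 1 →
        dist (P i' j') (P i j) ≤ C / N := by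
      intro i j i' j' h1 h2 h3 h4
      rw [Prod.dist_eq]
      have hd1 : dist (P i' j').1 (P i j).1 ≤ C / N := by
        rw [Real.dist_eq]
        refine le_trans (pm_aux_dist ha' hN0 i i' h1 h2) ?_
        exact (div_le_div_iff_of_pos_right hN').mpr hC1
      have hd2 : dist (P i' j').2 (P i j).2 ≤ C / N := by
        rw [Real.dist_eq]
        refine le_trans (pm_aux_dist ht' hN0 j j' h3 h4) ?_
        exact (div_le_div_iff_of_pos_right hN').mpr hC2
      exact max_le hd1 hd2
    have hPbot : ∀ i : ℕ, P i 0 = (a₁ + i * (a₂ - a₁) / N, t₁) := by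
      intro i; simp [hP]
    have htop2 : t₁ + (N:ℝ) * (t₂ - t₁) / N = t₂ := by field_simp; ring
    have hright2 : a₁ + (N:ℝ) * (a₂ - a₁) / N = a₂ := by field_simp; ring
    have hPtop : ∀ i : ℕ, P i N = (a₁ + i * (a₂ - a₁) / N, t₂) := by
      intro i; simp only [hP]; rw [htop2]
    have hPleft : ∀ j : ℕ, P 0 j = (a₁, t₁ + j * (t₂ - t₁) / N) := by
      intro j; simp [hP]
    have hPright : ∀ j : ℕ, P N j = (a₂, t₁ + j * (t₂ - t₁) / N) := by
      intro j; simp only [hP]; rw [hright2]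
    set fB : ℕ → ℕ → ZMod 2 := fun i j => if 0 < F (P i j) then 1 else 0 with hfB
    set gB : ℕ → ℕ → ZMod 2 := fun i j => if 0 < G (P i j) then 1 else 0 with hgB
    have hfval1 : ∀ i j, fB i j = 1 → 0 < F (P i j) := by
      intro i j h; by_contra hc
      simp only [hfB, if_neg hc] at h
      exact (by decide : (0:ZMod 2) ≠ 1) h
    have hfval0 : ∀ i j, fB i j = 0 → F (P i j) ≤ 0 := by
      intro i j h; by_contra hc
      push_neg at hc
      simp only [hfB, if_pos hc] at h
      exact one_ne_zero h
    have hgval1 : ∀ i j, gB i j = 1 → 0 < G (P i j) := by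
      intro i j h; by_contra hc
      simp only [hgB, if_neg hc] at h
      exact (by decide : (0:ZMod 2) ≠ 1) h
    have hgval0 : ∀ i j, gB i j = 0 → G (P i j) ≤ 0 := by
      intro i j h; by_contra hc
      push_neg at hc
      simp only [hgB, if_pos hc] at h
      exact one_ne_zero h
    obtain ⟨i, j, hi, hj, hf0, hf1, hg0, hg1⟩ := discrete_pm N fB gB
      (by
        intro i hi
        have : 0 < F (P i 0) := by
          rw [hPbot i]; exact hF₁ _ (pm_aux_mem ha' hN0 hi)
        simp only [hfB, if_pos this])
      (by
        intro i hi
        have : ¬ 0 < F (P i N) := by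
          rw [hPtop i]
          exact not_lt.mpr (hF₂ _ (pm_aux_mem ha' hN0 hi)).le
        simp only [hfB, if_neg this])
      (by
        intro j hj
        have : ¬ 0 < G (P 0 j) := by
          rw [hPleft j]
          exact not_lt.mpr (hG₁ _ (pm_aux_mem ht' hN0 hj)).le
        simp only [hgB, if_neg this])
      (by
        intro j hj
        have : 0 < G (P N j) := by
          rw [hPright j]; exact hG₂ _ (pm_aux_mem ht' hN0 hj)
        simp only [hgB, if_pos this])
    have hiN : i + 1 ≤ N := hi
    have hjN : j + 1 ≤ N := hj
    have hCd : ∀ i' j', i ≤ i' → i' ≤ i + 1 → j ≤ j' → j' ≤ j + 1 →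
        (P i' j' ∈ K ∧ dist (P i' j') (P i j) ≤ C / (n+1)) := by
      intro i' j' h1 h2 h3 h4
      refine ⟨hPmem (h2.trans hiN) (h4.trans hjN), ?_⟩
      have := hPdist i j i' j' h1 h2 h3 h4
      rwa [hNcast] at this
    have hu : ∃ i' j', i ≤ i' ∧ i' ≤ i+1 ∧ j ≤ j' ∧ j' ≤ j+1 ∧ 0 < F (P i' j') := by
      rcases hf1 with h | h | h | h
      · exact ⟨i, j, le_rfl, Nat.le_succ _, le_rfl, Nat.le_succ _, hfval1 _ _ h⟩
      · exact ⟨i+1, j, Nat.le_succ _, le_rfl, le_rfl, Nat.le_succ _, hfval1 _ _ h⟩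
      · exact ⟨i, j+1, le_rfl, Nat.le_succ _, Nat.le_succ _, le_rfl, hfval1 _ _ h⟩
      · exact ⟨i+1, j+1, Nat.le_succ _, le_rfl, Nat.le_succ _, le_rfl, hfval1 _ _ h⟩
    have hv : ∃ i' j', i ≤ i' ∧ i' ≤ i+1 ∧ j ≤ j' ∧ j' ≤ j+1 ∧ F (P i' j') ≤ 0 := by
      rcases hf0 with h | h | h | h
      · exact ⟨i, j, le_rfl, Nat.le_succ _, le_rfl, Nat.le_succ _, hfval0 _ _ h⟩
      · exact ⟨i+1, j, Nat.le_succ _, le_rfl, le_rfl, Nat.le_succ _, hfval0 _ _ h⟩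
      · exact ⟨i, j+1, le_rfl, Nat.le_succ _, Nat.le_succ _, le_rfl, hfval0 _ _ h⟩
      · exact ⟨i+1, j+1, Nat.le_succ _, le_rfl, Nat.le_succ _, le_rfl, hfval0 _ _ h⟩
    have hw : ∃ i' j', i ≤ i' ∧ i' ≤ i+1 ∧ j ≤ j' ∧ j' ≤ j+1 ∧ 0 < G (P i' j') := by
      rcases hg1 with h | h | h | h
      · exact ⟨i, j, le_rfl, Nat.le_succ _, le_rfl, Nat.le_succ _, hgval1 _ _ h⟩
      · exact ⟨i+1, j, Nat.le_succ _, le_rfl, le_rfl, Nat.le_succ _, hgval1 _ _ h⟩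
      · exact ⟨i, j+1, le_rfl, Nat.le_succ _, Nat.le_succ _, le_rfl, hgval1 _ _ h⟩
      · exact ⟨i+1, j+1, Nat.le_succ _, le_rfl, Nat.le_succ _, le_rfl, hgval1 _ _ h⟩
    have hz : ∃ i' j', i ≤ i' ∧ i' ≤ i+1 ∧ j ≤ j' ∧ j' ≤ j+1 ∧ G (P i' j') ≤ 0 := by
      rcases hg0 with h | h | h | h
      · exact ⟨i, j, le_rfl, Nat.le_succ _, le_rfl, Nat.le_succ _, hgval0 _ _ h⟩
      · exact ⟨i+1, j, Nat.le_succ _, le_rfl, le_rfl, Nat.le_succ _, hgval0 _ _ h⟩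
      · exact ⟨i, j+1, le_rfl, Nat.le_succ _, Nat.le_succ _, le_rfl, hgval0 _ _ h⟩
      · exact ⟨i+1, j+1, Nat.le_succ _, le_rfl, Nat.le_succ _, le_rfl, hgval0 _ _ h⟩
    obtain ⟨iu, ju, hu1, hu2, hu3, hu4, hFu⟩ := hu
    obtain ⟨iv, jv, hv1, hv2, hv3, hv4, hFv⟩ := hv
    obtain ⟨iw, jw, hw1, hw2, hw3, hw4, hGw⟩ := hw
    obtain ⟨iz, jz, hz1, hz2, hz3, hz4, hGz⟩ := hz
    obtain ⟨huK, hud⟩ := hCd iu ju hu1 hu2 hu3 hu4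
    obtain ⟨hvK, hvd⟩ := hCd iv jv hv1 hv2 hv3 hv4
    obtain ⟨hwK, hwd⟩ := hCd iw jw hw1 hw2 hw3 hw4
    obtain ⟨hzK, hzd⟩ := hCd iz jz hz1 hz2 hz3 hz4
    exact ⟨P i j, P iu ju, P iv jv, P iw jw, P iz jz,
      hPmem (Nat.le_of_succ_le hiN) (Nat.le_of_succ_le hjN), huK, hvK, hwK, hzK,
      hud, hvd, hwd, hzd, hFu, hFv, hGw, hGz⟩
  choose p u v w z hp huK hvK hwK hzK hdu hdv hdw hdz hFu hFv hGw hGz using main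
  obtain ⟨q, hq, φ, hφ, hconv⟩ := hKc.tendsto_subseq hp
  have hC0 : (0:ℝ) ≤ C := le_trans (by linarith) hC1
  have hrate : Tendsto (fun m : ℕ => C / (m+1 : ℝ)) atTop (nhds 0) := by
    have h2 := tendsto_one_div_add_atTop_nhds_zero_nat.const_mul C
    simpa [mul_one_div, div_eq_mul_inv] using h2
  have hlim : ∀ (x : ℕ → ℝ × ℝ), (∀ m, dist (x m) (p m) ≤ C / (m+1)) →
      Tendsto (fun m => x (φ m)) atTop (nhds q) := by
    intro x hxd
    rw [tendsto_iff_dist_tendsto_zero]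
    have hd0 : Tendsto (fun m => dist (p (φ m)) q) atTop (nhds 0) :=
      tendsto_iff_dist_tendsto_zero.mp hconv
    have hg : Tendsto (fun m : ℕ => C / (m+1 : ℝ) + dist (p (φ m)) q) atTop (nhds 0) := by
      simpa using hrate.add hd0
    refine squeeze_zero (fun m => dist_nonneg) (fun m => ?_) hg
    have hb : dist (x (φ m)) q ≤ dist (x (φ m)) (p (φ m)) + dist (p (φ m)) q :=
      dist_triangle _ _ _
    have hmono : C / ((φ m : ℝ) + 1) ≤ C / ((m : ℝ) + 1) := by
      have h1 : (m:ℝ) + 1 ≤ (φ m : ℝ) + 1 := by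
        have h0 : m ≤ φ m := hφ.le_apply
        have : (m:ℝ) ≤ φ m := by exact_mod_cast h0
        linarith
      exact div_le_div_of_nonneg_left hC0 (by positivity) h1
    have := hxd (φ m)
    linarith
  have hcu : Tendsto (fun m => F (u (φ m))) atTop (nhds (F q)) := by
    refine (hF.continuousWithinAt hq).tendsto.comp ?_
    exact tendsto_nhdsWithin_of_tendsto_nhds_of_eventually_within _
      (hlim u hdu) (Filter.Eventually.of_forall fun m => huK (φ m))
  have hcv : Tendsto (fun m => F (v (φ m))) atTop (nhds (F q)) := by
    refine (hF.continuousWithinAt hq).tendsto.comp ?_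
    exact tendsto_nhdsWithin_of_tendsto_nhds_of_eventually_within _
      (hlim v hdv) (Filter.Eventually.of_forall fun m => hvK (φ m))
  have hcw : Tendsto (fun m => G (w (φ m))) atTop (nhds (G q)) := by
    refine (hG.continuousWithinAt hq).tendsto.comp ?_
    exact tendsto_nhdsWithin_of_tendsto_nhds_of_eventually_within _
      (hlim w hdw) (Filter.Eventually.of_forall fun m => hwK (φ m))
  have hcz : Tendsto (fun m => G (z (φ m))) atTop (nhds (G q)) := by
    refine (hG.continuousWithinAt hq).tendsto.comp ?_
    exact tendsto_nhdsWithin_of_tendsto_nhds_of_eventually_within _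
      (hlim z hdz) (Filter.Eventually.of_forall fun m => hzK (φ m))
  have h1 : 0 ≤ F q := ge_of_tendsto' hcu fun m => (hFu (φ m)).le
  have h2 : F q ≤ 0 := le_of_tendsto' hcv fun m => hFv (φ m)
  have h3 : 0 ≤ G q := ge_of_tendsto' hcw fun m => (hGw (φ m)).le
  have h4 : G q ≤ 0 := le_of_tendsto' hcz fun m => hGz (φ m)
  exact ⟨q, hq, le_antisymm h2 h1, le_antisymm h4 h3⟩
end

section
/- Let f : ℝ³ → ℝ³ be defined by f(u) = (cos u₃, sin u₃ / sin u₁, −3 (cos u₁/sin u₁) sin u₃ + 2 (cos u₃ / sin u₁) (cos 2u₂ / sin 2u₂) − 3), and let U₂ = {u ∈ ℝ³ : 33/25 < u₁ < 393/250, 521/1000 < u₂ < 787/1000, 1569/1000 < u₃ < 3143/1000}. Then for every u ∈ U₂: |f₁(u)| ≤ 1, |f₂(u)| < 1.033, and |f₃(u)| < 4.98. -/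
set_option maxHeartbeats 1000000

open Real

private lemma sin_poly_ub {x : ℝ} (hx : |x| ≤ 1) :
    Real.sin x ≤ x - x ^ 3 / 6 + x ^ 4 * (5 / 96) := by
  have h := abs_le.1 (Real.sin_bound hx)
  have h4 : |x| ^ 4 = x ^ 4 := by
    rw [show (4 : ℕ) = 2 * 2 from rfl, pow_mul, pow_mul, sq_abs]
  have h5 : |x| ^ 5 ≤ |x| ^ 4 := pow_le_pow_of_le_one (abs_nonneg x) hx (by norm_num)
  have h6 : (0 : ℝ) ≤ x ^ 4 := by positivity
  linarith [h.2]

private lemma cos_poly_lb {x : ℝ} (hx : |x| ≤ 1) :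
    1 - x ^ 2 / 2 - x ^ 4 * (5 / 96) ≤ Real.cos x := by
  have h := abs_le.1 (Real.cos_bound hx)
  have h4 : |x| ^ 4 = x ^ 4 := by
    rw [show (4 : ℕ) = 2 * 2 from rfl, pow_mul, pow_mul, sq_abs]
  linarith [h.1]

private lemma sin_ge_aux {x c : ℝ} (hc : 0 ≤ c) (h1 : -c ≤ x) (h2 : x ≤ π) :
    -c ≤ Real.sin x := by
  rcases le_or_gt 0 x with h | h
  · have := Real.sin_nonneg_of_nonneg_of_le_pi h h2
    linarith
  · have hs := Real.sin_lt (neg_pos.2 h)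
    rw [Real.sin_neg] at hs
    linarith

private lemma sin_le_aux {x c : ℝ} (hc : 0 ≤ c) (h1 : -π ≤ x) (h2 : x ≤ c) :
    Real.sin x ≤ c := by
  rcases le_or_gt x 0 with h | h
  · have := Real.sin_nonpos_of_nonpos_of_neg_pi_le h h1
    linarith
  · have := Real.sin_lt h
    linarith

private lemma sin_le_24845 {x : ℝ} (h1 : -0.0013 ≤ x) (h2 : x ≤ 0.2508) :
    Real.sin x ≤ 0.24845 := by
  have habs : |x| ≤ 1 := abs_le.2 ⟨by linarith, by linarith⟩
  have hp := sin_poly_ub habs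
  have hb1 : (0 : ℝ) ≤ 0.2508 - x := by linarith
  have hb2 : (0 : ℝ) ≤ x + 0.0013 := by linarith
  nlinarith [mul_nonneg hb1 hb2, mul_nonneg (mul_nonneg hb1 hb2) hb2,
    mul_nonneg (mul_nonneg hb1 hb1) hb2, mul_nonneg hb1 (sq_nonneg x),
    mul_nonneg hb2 (sq_nonneg x), sq_nonneg x,
    mul_nonneg (mul_nonneg hb1 hb1) hb1]

private lemma cos_ge_9683 {x : ℝ} (hx : |x| ≤ 0.2508) : (0.9683 : ℝ) ≤ Real.cos x := by
  have h := cos_poly_lb (le_trans hx (by norm_num))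
  have h2 : x ^ 2 ≤ 0.2508 ^ 2 := by nlinarith [sq_abs x, abs_nonneg x]
  have h4 : x ^ 4 ≤ 0.2508 ^ 4 := by nlinarith [sq_nonneg x]
  nlinarith

private lemma cos_ge_856 {x : ℝ} (hx : |x| ≤ 0.5288) : (0.856 : ℝ) ≤ Real.cos x := by
  have h := cos_poly_lb (le_trans hx (by norm_num))
  have h2 : x ^ 2 ≤ 0.5288 ^ 2 := by nlinarith [sq_abs x, abs_nonneg x]
  have h4 : x ^ 4 ≤ 0.5288 ^ 4 := by nlinarith [sq_nonneg x]
  nlinarith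

private lemma tan_half_bound {y : ℝ} (hyl : (-0.0033 : ℝ) ≤ y) (hyu : y ≤ 0.5288) :
    Real.sin y ≤ 0.5857 * Real.cos y := by
  have hpl : (3.141592 : ℝ) < π := pi_gt_d6
  rcases le_or_gt y 0 with h | h
  · have hs : Real.sin y ≤ 0 := Real.sin_nonpos_of_nonpos_of_neg_pi_le h (by linarith)
    have hc : (0 : ℝ) < Real.cos y := Real.cos_pos_of_mem_Ioo ⟨by linarith, by linarith⟩
    nlinarith
  · have hy : y = 2 * (y / 2) := by ring
    rw [hy, Real.sin_two_mul, Real.cos_two_mul]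
    set t := y / 2 with ht
    have htu : t ≤ 0.2644 := by rw [ht]; linarith
    have htl : 0 < t := by rw [ht]; linarith
    have hpyth := Real.sin_sq_add_cos_sq t
    have hspos : 0 < Real.sin t := Real.sin_pos_of_pos_of_lt_pi htl (by rw [ht]; linarith)
    have hcpos : 0 < Real.cos t :=
      Real.cos_pos_of_mem_Ioo ⟨by rw [ht]; linarith, by rw [ht]; linarith⟩
    have habs : |t| ≤ 1 := abs_le.2 ⟨by linarith, by linarith⟩
    have hsub : Real.sin t ≤ 0.2616 := by
      have hp := sin_poly_ub habs
      have hb1 : (0 : ℝ) ≤ 0.2644 - t := by linarith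
      have hb2 : (0 : ℝ) ≤ t := le_of_lt htl
      nlinarith [mul_nonneg hb1 hb2, mul_nonneg (mul_nonneg hb1 hb2) hb2,
        mul_nonneg (mul_nonneg hb1 hb1) hb2, mul_nonneg hb1 (sq_nonneg t),
        mul_nonneg hb2 (sq_nonneg t), sq_nonneg t,
        mul_nonneg (mul_nonneg hb1 hb1) hb1]
    have hc2 : Real.cos t ^ 2 = 1 - Real.sin t ^ 2 := by linarith
    have hrpos : (0 : ℝ) ≤ 0.5857 * (2 * Real.cos t ^ 2 - 1) := by nlinarith
    have hlpos : (0 : ℝ) ≤ 2 * Real.sin t * Real.cos t := by positivity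
    have hkey : (2 * Real.sin t * Real.cos t) ^ 2 ≤ (0.5857 * (2 * Real.cos t ^ 2 - 1)) ^ 2 := by
      nlinarith [sq_nonneg (Real.sin t), sq_nonneg (Real.sin t ^ 2),
        mul_nonneg (le_of_lt hspos) (le_of_lt hspos),
        sq_nonneg (0.2616 ^ 2 - Real.sin t ^ 2),
        mul_nonneg (by nlinarith : (0:ℝ) ≤ 0.2616 ^ 2 - Real.sin t ^ 2)
          (by nlinarith : (0:ℝ) ≤ 1 - 0.2616 ^ 2 - Real.sin t ^ 2)]
    exact (pow_le_pow_iff_left₀ hlpos hrpos (two_ne_zero)).1 hkey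

/-- Bounds on the components of the vector field
`f(u) = (cos u₃, sin u₃ / sin u₁, −3 cot u₁ sin u₃ + 2 (cos u₃ / sin u₁) cot (2u₂) − 3)`
on the open box `U₂`. -/
theorem vector_field_bounds_on_U2 (u₁ u₂ u₃ : ℝ)
    (h₁ : 33 / 25 < u₁ ∧ u₁ < 393 / 250)
    (h₂ : 521 / 1000 < u₂ ∧ u₂ < 787 / 1000)
    (h₃ : 1569 / 1000 < u₃ ∧ u₃ < 3143 / 1000) :
    |cos u₃| ≤ 1 ∧
    |sin u₃ / sin u₁| < 1.033 ∧
    |(-3) * (cos u₁ / sin u₁) * sin u₃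
      + 2 * (cos u₃ / sin u₁) * (cos (2 * u₂) / sin (2 * u₂)) - 3| < 4.98 := by
  obtain ⟨h1l, h1u⟩ := h₁
  obtain ⟨h2l, h2u⟩ := h₂
  obtain ⟨h3l, h3u⟩ := h₃
  have hpl : (3.141592 : ℝ) < π := pi_gt_d6
  have hpu : π < 3.141593 := pi_lt_d6
  -- bounds for sin u₁ and cos u₁ via x₁ = π/2 - u₁
  have haabs : |π / 2 - u₁| ≤ 0.2508 := abs_le.2 ⟨by linarith, by linarith⟩
  have hs1 : (0.9683 : ℝ) ≤ sin u₁ := by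
    rw [← Real.cos_pi_div_two_sub]; exact cos_ge_9683 haabs
  have hs1' : sin u₁ ≤ 1 := sin_le_one u₁
  have hs1pos : (0 : ℝ) < sin u₁ := by linarith
  have hc1u : cos u₁ ≤ 0.24845 := by
    rw [← Real.sin_pi_div_two_sub]
    exact sin_le_24845 (by linarith) (by linarith)
  have hc1l : (-0.0013 : ℝ) ≤ cos u₁ := by
    rw [← Real.sin_pi_div_two_sub]
    exact sin_ge_aux (by norm_num) (by linarith) (by linarith)
  -- bounds for sin u₃ and cos u₃
  have hs3u : sin u₃ ≤ 1 := sin_le_one u₃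
  have hs3l : (-0.0015 : ℝ) ≤ sin u₃ := by
    rw [← Real.sin_pi_sub]
    exact sin_ge_aux (by norm_num) (by linarith) (by linarith)
  have hc3u : cos u₃ ≤ 0.0018 := by
    rw [← Real.sin_pi_div_two_sub]
    exact sin_le_aux (by norm_num) (by linarith) (by linarith)
  have hc3l : (-1 : ℝ) ≤ cos u₃ := neg_one_le_cos u₃
  -- bounds for sin (2 u₂) and cos (2 u₂) via y = π/2 - 2 u₂
  have hy2abs : |π / 2 - 2 * u₂| ≤ 0.5288 := abs_le.2 ⟨by linarith, by linarith⟩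
  have hsy : (0.856 : ℝ) ≤ sin (2 * u₂) := by
    rw [← Real.cos_pi_div_two_sub]; exact cos_ge_856 hy2abs
  have hsy1 : sin (2 * u₂) ≤ 1 := sin_le_one _
  have hsypos : (0 : ℝ) < sin (2 * u₂) := by linarith
  have hcyl : (-0.0033 : ℝ) ≤ cos (2 * u₂) := by
    rw [← Real.sin_pi_div_two_sub]
    exact sin_ge_aux (by norm_num) (by linarith) (by linarith)
  have hcyu : cos (2 * u₂) ≤ 0.5857 * sin (2 * u₂) := by
    have h := tan_half_bound (y := π / 2 - 2 * u₂) (by linarith) (by linarith)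
    rwa [Real.sin_pi_div_two_sub, Real.cos_pi_div_two_sub] at h
  -- quotient bounds
  have hq1u : cos u₁ / sin u₁ ≤ 0.2566 := by
    rw [div_le_iff₀ hs1pos]; nlinarith
  have hq1l : (-0.0014 : ℝ) ≤ cos u₁ / sin u₁ := by
    rw [le_div_iff₀ hs1pos]; nlinarith
  have hq2u : cos u₃ / sin u₁ ≤ 0.0019 := by
    rw [div_le_iff₀ hs1pos]; nlinarith
  have hq2l : (-1.0328 : ℝ) ≤ cos u₃ / sin u₁ := by
    rw [le_div_iff₀ hs1pos]; nlinarith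
  have hq3u : cos (2 * u₂) / sin (2 * u₂) ≤ 0.5857 := by
    rw [div_le_iff₀ hsypos]; linarith
  have hq3l : (-0.004 : ℝ) ≤ cos (2 * u₂) / sin (2 * u₂) := by
    rw [le_div_iff₀ hsypos]; nlinarith
  -- product bounds
  have hXu : (cos u₁ / sin u₁) * sin u₃ ≤ 0.2566 := by
    rcases le_or_gt 0 (sin u₃) with h | h
    · nlinarith [mul_nonneg (sub_nonneg.2 hq1u) h]
    · nlinarith [mul_nonneg (by linarith : (0:ℝ) ≤ cos u₁ / sin u₁ + 0.0014)
        (by linarith : (0:ℝ) ≤ -sin u₃)]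
  have hXl : (-0.0014 : ℝ) ≤ (cos u₁ / sin u₁) * sin u₃ := by
    rcases le_or_gt 0 (sin u₃) with h | h
    · nlinarith [mul_nonneg (by linarith : (0:ℝ) ≤ cos u₁ / sin u₁ + 0.0014) h]
    · nlinarith [mul_nonneg (sub_nonneg.2 hq1u) (by linarith : (0:ℝ) ≤ -sin u₃)]
  have hYu : (cos u₃ / sin u₁) * (cos (2 * u₂) / sin (2 * u₂)) ≤ 0.0042 := by
    rcases le_or_gt 0 (cos (2 * u₂) / sin (2 * u₂)) with h | h
    · nlinarith [mul_nonneg (sub_nonneg.2 hq2u) h]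
    · nlinarith [mul_nonneg (by linarith : (0:ℝ) ≤ cos u₃ / sin u₁ + 1.0328)
        (by linarith : (0:ℝ) ≤ -(cos (2 * u₂) / sin (2 * u₂)))]
  have hYl : (-0.60492 : ℝ) ≤ (cos u₃ / sin u₁) * (cos (2 * u₂) / sin (2 * u₂)) := by
    rcases le_or_gt 0 (cos (2 * u₂) / sin (2 * u₂)) with h | h
    · nlinarith [mul_nonneg (by linarith : (0:ℝ) ≤ cos u₃ / sin u₁ + 1.0328) h]
    · nlinarith [mul_nonneg (sub_nonneg.2 hq2u)
        (by linarith : (0:ℝ) ≤ -(cos (2 * u₂) / sin (2 * u₂)))]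
  refine ⟨abs_cos_le_one u₃, ?_, ?_⟩
  · have habs : |sin u₃| ≤ 1 := abs_le.2 ⟨neg_one_le_sin u₃, sin_le_one u₃⟩
    rw [abs_div, abs_of_pos hs1pos, div_lt_iff₀ hs1pos]
    linarith
  · rw [abs_lt]
    constructor
    · linarith
    · linarith
end

section
/- Let f : ℝ³ → ℝ³ be defined by f(u) = (cos u₃, sin u₃ / sin u₁, −3 (cos u₁/sin u₁) sin u₃ + 2 (cos u₃ / sin u₁) (cos 2u₂ / sin 2u₂) − 3), let U₂ = {u ∈ ℝ³ : 33/25 < u₁ < 393/250, 521/1000 < u₂ < 787/1000, 1569/1000 < u₃ < 3143/1000}, and define F₁ = (Df)·f : ℝ³ → ℝ³ (the directional derivative of f along itself). Then for every u ∈ U₂: |F₁₁(u)| < 4.98, |F₁₂(u)| < 5.41, and |F₁₃(u)| < 15.26. -/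
open Real

/-- The vector field of the CMC profile-curve ODE system, identifying
`(r, θ, α)` with `(u 0, u 1, u 2)`. -/
noncomputable def cmcField : EuclideanSpace ℝ (Fin 3) → EuclideanSpace ℝ (Fin 3) :=
  fun u => (WithLp.equiv 2 (Fin 3 → ℝ)).symm
    ![cos (u 2),
      sin (u 2) / sin (u 0),
      -3 * (cos (u 0) / sin (u 0)) * sin (u 2)
        + 2 * (cos (u 2) / sin (u 0)) * (cos (2 * u 1) / sin (2 * u 1)) - 3]

private theorem mul_bnd {a b la ua lb ub lc uc : ℝ}
    (h1 : la ≤ a) (h2 : a ≤ ua) (h3 : lb ≤ b) (h4 : b ≤ ub)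
    (c1 : lc ≤ la*lb) (c2 : lc ≤ la*ub) (c3 : lc ≤ ua*lb) (c4 : lc ≤ ua*ub)
    (d1 : la*lb ≤ uc) (d2 : la*ub ≤ uc) (d3 : ua*lb ≤ uc) (d4 : ua*ub ≤ uc) :
    lc ≤ a*b ∧ a*b ≤ uc := by
  constructor
  · rcases le_total 0 b with hb | hb
    · rcases le_total 0 la with h | h
      · nlinarith [mul_nonneg (sub_nonneg.2 h1) hb, mul_nonneg h (sub_nonneg.2 h3)]
      · nlinarith [mul_nonneg (sub_nonneg.2 h1) hb,
          mul_nonneg (neg_nonneg.2 h) (sub_nonneg.2 h4)]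
    · rcases le_total 0 ua with h | h
      · nlinarith [mul_nonneg (sub_nonneg.2 h2) (neg_nonneg.2 hb),
          mul_nonneg h (sub_nonneg.2 h3)]
      · nlinarith [mul_nonneg (sub_nonneg.2 h2) (neg_nonneg.2 hb),
          mul_nonneg (neg_nonneg.2 h) (sub_nonneg.2 h4)]
  · rcases le_total 0 b with hb | hb
    · rcases le_total 0 ua with h | h
      · nlinarith [mul_nonneg (sub_nonneg.2 h2) hb, mul_nonneg h (sub_nonneg.2 h4)]
      · nlinarith [mul_nonneg (sub_nonneg.2 h2) hb,
          mul_nonneg (neg_nonneg.2 h) (sub_nonneg.2 h3)]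
    · rcases le_total 0 la with h | h
      · nlinarith [mul_nonneg (sub_nonneg.2 h1) (neg_nonneg.2 hb),
          mul_nonneg h (sub_nonneg.2 h4)]
      · nlinarith [mul_nonneg (sub_nonneg.2 h1) (neg_nonneg.2 hb),
          mul_nonneg (neg_nonneg.2 h) (sub_nonneg.2 h3)]

private theorem sinI {x l u : ℝ} (h0 : 0 ≤ x) (h1 : x ≤ 1)
    (hl : l ≤ x - x^3/6 - x^4*(5/96)) (hu : x - x^3/6 + x^4*(5/96) ≤ u) :
    l ≤ sin x ∧ sin x ≤ u := by
  have habs : |x| = x := abs_of_nonneg h0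
  have h := Real.sin_bound (x := x) (le_of_eq_of_le habs h1)
  rw [habs, abs_le] at h
  have hx5 : x^5 ≤ x^4 := by nlinarith [pow_nonneg h0 4]
  constructor <;> linarith [h.1, h.2, hx5, pow_nonneg h0 4]

private theorem cosI {x l u : ℝ} (h0 : 0 ≤ x) (h1 : x ≤ 1)
    (hl : l ≤ 1 - x^2/2 - x^4*(5/96)) (hu : 1 - x^2/2 + x^4*(5/96) ≤ u) :
    l ≤ cos x ∧ cos x ≤ u := by
  have habs : |x| = x := abs_of_nonneg h0
  have h := Real.cos_bound (x := x) (le_of_eq_of_le habs h1)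
  rw [habs, abs_le] at h
  constructor <;> linarith [h.1, h.2]

private theorem cos_dbl (x : ℝ) : cos (2*x) = 1 - 2 * sin x ^ 2 := by
  have h := sin_sq_add_cos_sq x
  rw [Real.cos_two_mul]; linarith

set_option maxHeartbeats 1000000 in
private theorem chainA : cos (1.32:ℝ) ≤ 0.24868336 := by
  have hs1 : (0.1642127:ℝ) ≤ sin 0.165 ∧ sin 0.165 ≤ 0.16428992 :=
    sinI (by norm_num) (by norm_num) (by norm_num) (by norm_num)
  have hc1 : (0.98634889:ℝ) ≤ cos 0.165 ∧ cos 0.165 ≤ 0.98642611 :=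
    cosI (by norm_num) (by norm_num) (by norm_num) (by norm_num)
  have e2 : (0.33:ℝ) = 2*0.165 := by norm_num
  have hp2 : (0.16197101:ℝ) ≤ sin 0.165 * cos 0.165 ∧ sin 0.165 * cos 0.165 ≤ 0.16205987 :=
    mul_bnd hs1.1 hs1.2 hc1.1 hc1.2 (by norm_num) (by norm_num) (by norm_num) (by norm_num)
      (by norm_num) (by norm_num) (by norm_num) (by norm_num)
  have hs2 : (0.32394202:ℝ) ≤ sin 0.33 ∧ sin 0.33 ≤ 0.32411974 := by
    rw [e2, Real.sin_two_mul]; constructor <;> linarith [hp2.1, hp2.2]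
  have hq2 : (0.02696581:ℝ) ≤ sin 0.165 * sin 0.165 ∧ sin 0.165 * sin 0.165 ≤ 0.02699118 :=
    mul_bnd hs1.1 hs1.2 hs1.1 hs1.2 (by norm_num) (by norm_num) (by norm_num) (by norm_num)
      (by norm_num) (by norm_num) (by norm_num) (by norm_num)
  have hc2 : (0.94601764:ℝ) ≤ cos 0.33 ∧ cos 0.33 ≤ 0.94606838 := by
    rw [e2, cos_dbl]; constructor <;> linarith [hq2.1, hq2.2]
  have e3 : (0.66:ℝ) = 2*0.33 := by norm_num
  have hp3 : (0.30645486:ℝ) ≤ sin 0.33 * cos 0.33 ∧ sin 0.33 * cos 0.33 ≤ 0.30663944 :=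
    mul_bnd hs2.1 hs2.2 hc2.1 hc2.2 (by norm_num) (by norm_num) (by norm_num) (by norm_num)
      (by norm_num) (by norm_num) (by norm_num) (by norm_num)
  have hs3 : (0.61290972:ℝ) ≤ sin 0.66 ∧ sin 0.66 ≤ 0.61327888 := by
    rw [e3, Real.sin_two_mul]; constructor <;> linarith [hp3.1, hp3.2]
  have hq3 : (0.10493843:ℝ) ≤ sin 0.33 * sin 0.33 ∧ sin 0.33 * sin 0.33 ≤ 0.10505361 :=
    mul_bnd hs2.1 hs2.2 hs2.1 hs2.2 (by norm_num) (by norm_num) (by norm_num) (by norm_num)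
      (by norm_num) (by norm_num) (by norm_num) (by norm_num)
  have hc3 : (0.78989278:ℝ) ≤ cos 0.66 ∧ cos 0.66 ≤ 0.79012314 := by
    rw [e3, cos_dbl]; constructor <;> linarith [hq3.1, hq3.2]
  have e4 : (1.32:ℝ) = 2*0.66 := by norm_num
  have hq4 : (0.37565832:ℝ) ≤ sin 0.66 * sin 0.66 ∧ sin 0.66 * sin 0.66 ≤ 0.37611099 :=
    mul_bnd hs3.1 hs3.2 hs3.1 hs3.2 (by norm_num) (by norm_num) (by norm_num) (by norm_num)
      (by norm_num) (by norm_num) (by norm_num) (by norm_num)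
  rw [e4, cos_dbl]; linarith [hq4.1, hq4.2]

set_option maxHeartbeats 1000000 in
private theorem chainB : (0.86325:ℝ) ≤ sin 1.042 ∧ cos (1.042:ℝ) ≤ 0.50464608 := by
  have hs1 : (0.12986672:ℝ) ≤ sin 0.13025 ∧ sin 0.13025 ≤ 0.12989671 :=
    sinI (by norm_num) (by norm_num) (by norm_num) (by norm_num)
  have hc1 : (0.99150247:ℝ) ≤ cos 0.13025 ∧ cos 0.13025 ≤ 0.99153246 :=
    cosI (by norm_num) (by norm_num) (by norm_num) (by norm_num)
  have e2 : (0.2605:ℝ) = 2*0.13025 := by norm_num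
  have hp2 : (0.12876317:ℝ) ≤ sin 0.13025 * cos 0.13025 ∧ sin 0.13025 * cos 0.13025 ≤ 0.12879681 :=
    mul_bnd hs1.1 hs1.2 hc1.1 hc1.2 (by norm_num) (by norm_num) (by norm_num) (by norm_num)
      (by norm_num) (by norm_num) (by norm_num) (by norm_num)
  have hs2 : (0.25752634:ℝ) ≤ sin 0.2605 ∧ sin 0.2605 ≤ 0.25759362 := by
    rw [e2, Real.sin_two_mul]; constructor <;> linarith [hp2.1, hp2.2]
  have hq2 : (0.01686536:ℝ) ≤ sin 0.13025 * sin 0.13025 ∧ sin 0.13025 * sin 0.13025 ≤ 0.01687316 :=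
    mul_bnd hs1.1 hs1.2 hs1.1 hs1.2 (by norm_num) (by norm_num) (by norm_num) (by norm_num)
      (by norm_num) (by norm_num) (by norm_num) (by norm_num)
  have hc2 : (0.96625368:ℝ) ≤ cos 0.2605 ∧ cos 0.2605 ≤ 0.96626928 := by
    rw [e2, cos_dbl]; constructor <;> linarith [hq2.1, hq2.2]
  have e3 : (0.521:ℝ) = 2*0.2605 := by norm_num
  have hp3 : (0.24883577:ℝ) ≤ sin 0.2605 * cos 0.2605 ∧ sin 0.2605 * cos 0.2605 ≤ 0.24890481 :=
    mul_bnd hs2.1 hs2.2 hc2.1 hc2.2 (by norm_num) (by norm_num) (by norm_num) (by norm_num)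
      (by norm_num) (by norm_num) (by norm_num) (by norm_num)
  have hs3 : (0.49767154:ℝ) ≤ sin 0.521 ∧ sin 0.521 ≤ 0.49780962 := by
    rw [e3, Real.sin_two_mul]; constructor <;> linarith [hp3.1, hp3.2]
  have hq3 : (0.06631981:ℝ) ≤ sin 0.2605 * sin 0.2605 ∧ sin 0.2605 * sin 0.2605 ≤ 0.06635448 :=
    mul_bnd hs2.1 hs2.2 hs2.1 hs2.2 (by norm_num) (by norm_num) (by norm_num) (by norm_num)
      (by norm_num) (by norm_num) (by norm_num) (by norm_num)
  have hc3 : (0.86729104:ℝ) ≤ cos 0.521 ∧ cos 0.521 ≤ 0.86736038 := by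
    rw [e3, cos_dbl]; constructor <;> linarith [hq3.1, hq3.2]
  have e4 : (1.042:ℝ) = 2*0.521 := by norm_num
  have hp4 : (0.43162606:ℝ) ≤ sin 0.521 * cos 0.521 ∧ sin 0.521 * cos 0.521 ≤ 0.43178035 :=
    mul_bnd hs3.1 hs3.2 hc3.1 hc3.2 (by norm_num) (by norm_num) (by norm_num) (by norm_num)
      (by norm_num) (by norm_num) (by norm_num) (by norm_num)
  constructor
  · rw [e4, Real.sin_two_mul]; linarith [hp4.1, hp4.2]
  · rw [e4, cos_dbl]
    have hq4 : (0.24767696:ℝ) ≤ sin 0.521 * sin 0.521 ∧ sin 0.521 * sin 0.521 ≤ 0.24781442 :=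
      mul_bnd hs3.1 hs3.2 hs3.1 hs3.2 (by norm_num) (by norm_num) (by norm_num) (by norm_num)
      (by norm_num) (by norm_num) (by norm_num) (by norm_num)
    linarith [hq4.1, hq4.2]

set_option maxHeartbeats 2000000 in
private theorem boundsLemma (s0 c0 S C s2 c2 : ℝ)
    (hs0 : (0.96855:ℝ) ≤ s0 ∧ s0 ≤ 1)
    (hc0 : (-0.001204:ℝ) ≤ c0 ∧ c0 ≤ 0.24868336)
    (hSS : (0.86325:ℝ) ≤ S ∧ S ≤ 1)
    (hCC : (-0.003204:ℝ) ≤ C ∧ C ≤ 0.50464608)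
    (hs2 : (-0.001408:ℝ) ≤ s2 ∧ s2 ≤ 1)
    (hc2 : (-1:ℝ) ≤ c2 ∧ c2 ≤ 0.0017965) :
    |-s2 * (-3 * ((c0/s0) * s2) + 2 * ((c2 * (1/s0)) * (C/S)) - 3)| < 4.98 ∧
    |(c2 * (1/s0)) * (-3 * ((c0/s0) * s2) + 2 * ((c2 * (1/s0)) * (C/S)) - 3) - ((c0/s0) * s2) * (c2 * (1/s0))| < 5.41 ∧
    |3 * (((s0 * c2) * s0) * (((1/s0) * (1/s0)) * s2)) + 3 * ((c0 * (c0 * c2)) * (((1/s0) * (1/s0)) * s2)) - 3 * ((c0/s0) * (c2 * (-3 * ((c0/s0) * s2) + 2 * ((c2 * (1/s0)) * (C/S)) - 3))) - 2 * (((s2 * (-3 * ((c0/s0) * s2) + 2 * ((c2 * (1/s0)) * (C/S)) - 3)) * s0) * (((1/s0) * (1/s0)) * (C/S))) - 2 * ((c2 * (c0 * c2)) * (((1/s0) * (1/s0)) * (C/S))) - 4 * ((c2 * (1/s0)) * (((S * S) * (s2 * (1/s0))) * ((1/S) * (1/S)))) - 4 * ((c2 * (1/s0)) * (((C * C) * (s2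 * (1/s0))) * ((1/S) * (1/S))))| < 15.26 := by
  have hs0pos : (0:ℝ) < s0 := by linarith [hs0.1]
  have hSpos : (0:ℝ) < S := by linarith [hSS.1]
  have hk0 : (-0.0012431:ℝ) ≤ c0/s0 ∧ c0/s0 ≤ 0.25675842 := by
    constructor
    · rw [le_div_iff₀ hs0pos]; linarith [hc0.1, hs0.1, hs0.2]
    · rw [div_le_iff₀ hs0pos]; linarith [hc0.2, hs0.1]
  have hi0 : (1:ℝ) ≤ 1/s0 ∧ 1/s0 ≤ 1.03247122 := by
    constructor
    · rw [le_div_iff₀ hs0pos]; linarith [hs0.2]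
    · rw [div_le_iff₀ hs0pos]; linarith [hs0.1]
  have hk1 : (-0.00371156:ℝ) ≤ C/S ∧ C/S ≤ 0.58458857 := by
    constructor
    · rw [le_div_iff₀ hSpos]; linarith [hCC.1, hSS.1, hSS.2]
    · rw [div_le_iff₀ hSpos]; linarith [hCC.2, hSS.1]
  have hj : (1:ℝ) ≤ 1/S ∧ 1/S ≤ 1.15841298 := by
    constructor
    · rw [le_div_iff₀ hSpos]; linarith [hSS.2]
    · rw [div_le_iff₀ hSpos]; linarith [hSS.1]
  have hm1 : (-0.0012431:ℝ) ≤ (c0/s0) * s2 ∧ (c0/s0) * s2 ≤ 0.25675842 :=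
    mul_bnd hk0.1 hk0.2 hs2.1 hs2.2
      (by norm_num) (by norm_num) (by norm_num) (by norm_num)
      (by norm_num) (by norm_num) (by norm_num) (by norm_num)
  have hm2 : (-1.03247122:ℝ) ≤ c2 * (1/s0) ∧ c2 * (1/s0) ≤ 0.00185484 :=
    mul_bnd hc2.1 hc2.2 hi0.1 hi0.2
      (by norm_num) (by norm_num) (by norm_num) (by norm_num)
      (by norm_num) (by norm_num) (by norm_num) (by norm_num)
  have hm3 : (-0.60357088:ℝ) ≤ (c2 * (1/s0)) * (C/S) ∧ (c2 * (1/s0)) * (C/S) ≤ 0.00383208 :=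
    mul_bnd hm2.1 hm2.2 hk1.1 hk1.2
      (by norm_num) (by norm_num) (by norm_num) (by norm_num)
      (by norm_num) (by norm_num) (by norm_num) (by norm_num)
  have hl4 : (-4.97741702:ℝ) ≤ -3 * ((c0/s0) * s2) + 2 * ((c2 * (1/s0)) * (C/S)) - 3 ∧ -3 * ((c0/s0) * s2) + 2 * ((c2 * (1/s0)) * (C/S)) - 3 ≤ -2.98860654 := by
    constructor <;> linarith [hm1.1, hm1.2, hm3.1, hm3.2]
  have hm5 : (-4.97741702:ℝ) ≤ s2 * (-3 * ((c0/s0) * s2) + 2 * ((c2 * (1/s0)) * (C/S)) - 3) ∧ s2 * (-3 * ((c0/s0) * s2) + 2 * ((c2 * (1/s0)) * (C/S)) - 3) ≤ 0.00700821 :=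
    mul_bnd hs2.1 hs2.2 hl4.1 hl4.2
      (by norm_num) (by norm_num) (by norm_num) (by norm_num)
      (by norm_num) (by norm_num) (by norm_num) (by norm_num)
  have hm6 : (-0.00894193:ℝ) ≤ c2 * (-3 * ((c0/s0) * s2) + 2 * ((c2 * (1/s0)) * (C/S)) - 3) ∧ c2 * (-3 * ((c0/s0) * s2) + 2 * ((c2 * (1/s0)) * (C/S)) - 3) ≤ 4.97741702 :=
    mul_bnd hc2.1 hc2.2 hl4.1 hl4.2
      (by norm_num) (by norm_num) (by norm_num) (by norm_num)
      (by norm_num) (by norm_num) (by norm_num) (by norm_num)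
  have hm7 : (-0.00923232:ℝ) ≤ (c2 * (1/s0)) * (-3 * ((c0/s0) * s2) + 2 * ((c2 * (1/s0)) * (C/S)) - 3) ∧ (c2 * (1/s0)) * (-3 * ((c0/s0) * s2) + 2 * ((c2 * (1/s0)) * (C/S)) - 3) ≤ 5.13903983 :=
    mul_bnd hm2.1 hm2.2 hl4.1 hl4.2
      (by norm_num) (by norm_num) (by norm_num) (by norm_num)
      (by norm_num) (by norm_num) (by norm_num) (by norm_num)
  have hm8 : (-0.26509568:ℝ) ≤ ((c0/s0) * s2) * (c2 * (1/s0)) ∧ ((c0/s0) * s2) * (c2 * (1/s0)) ≤ 0.00128347 :=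
    mul_bnd hm1.1 hm1.2 hm2.1 hm2.2
      (by norm_num) (by norm_num) (by norm_num) (by norm_num)
      (by norm_num) (by norm_num) (by norm_num) (by norm_num)
  have hl9 : (-0.01051579:ℝ) ≤ (c2 * (1/s0)) * (-3 * ((c0/s0) * s2) + 2 * ((c2 * (1/s0)) * (C/S)) - 3) - ((c0/s0) * s2) * (c2 * (1/s0)) ∧ (c2 * (1/s0)) * (-3 * ((c0/s0) * s2) + 2 * ((c2 * (1/s0)) * (C/S)) - 3) - ((c0/s0) * s2) * (c2 * (1/s0)) ≤ 5.40413551 := by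
    constructor <;> linarith [hm7.1, hm7.2, hm8.1, hm8.2]
  have hm10 : (-0.24868336:ℝ) ≤ c0 * c2 ∧ c0 * c2 ≤ 0.001204 :=
    mul_bnd hc0.1 hc0.2 hc2.1 hc2.2
      (by norm_num) (by norm_num) (by norm_num) (by norm_num)
      (by norm_num) (by norm_num) (by norm_num) (by norm_num)
  have hm11 : (1.0:ℝ) ≤ (1/s0) * (1/s0) ∧ (1/s0) * (1/s0) ≤ 1.06599683 :=
    mul_bnd hi0.1 hi0.2 hi0.1 hi0.2
      (by norm_num) (by norm_num) (by norm_num) (by norm_num)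
      (by norm_num) (by norm_num) (by norm_num) (by norm_num)
  have hm12 : (-1.0:ℝ) ≤ s0 * c2 ∧ s0 * c2 ≤ 0.0017965 :=
    mul_bnd hs0.1 hs0.2 hc2.1 hc2.2
      (by norm_num) (by norm_num) (by norm_num) (by norm_num)
      (by norm_num) (by norm_num) (by norm_num) (by norm_num)
  have hm13 : (-1.0:ℝ) ≤ (s0 * c2) * s0 ∧ (s0 * c2) * s0 ≤ 0.0017965 :=
    mul_bnd hm12.1 hm12.2 hs0.1 hs0.2
      (by norm_num) (by norm_num) (by norm_num) (by norm_num)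
      (by norm_num) (by norm_num) (by norm_num) (by norm_num)
  have hm14 : (-0.00150093:ℝ) ≤ ((1/s0) * (1/s0)) * s2 ∧ ((1/s0) * (1/s0)) * s2 ≤ 1.06599683 :=
    mul_bnd hm11.1 hm11.2 hs2.1 hs2.2
      (by norm_num) (by norm_num) (by norm_num) (by norm_num)
      (by norm_num) (by norm_num) (by norm_num) (by norm_num)
  have hm15 : (-1.06599683:ℝ) ≤ ((s0 * c2) * s0) * (((1/s0) * (1/s0)) * s2) ∧ ((s0 * c2) * s0) * (((1/s0) * (1/s0)) * s2) ≤ 0.00191507 :=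
    mul_bnd hm13.1 hm13.2 hm14.1 hm14.2
      (by norm_num) (by norm_num) (by norm_num) (by norm_num)
      (by norm_num) (by norm_num) (by norm_num) (by norm_num)
  have hm16 : (-0.06184342:ℝ) ≤ c0 * (c0 * c2) ∧ c0 * (c0 * c2) ≤ 0.00029942 :=
    mul_bnd hc0.1 hc0.2 hm10.1 hm10.2
      (by norm_num) (by norm_num) (by norm_num) (by norm_num)
      (by norm_num) (by norm_num) (by norm_num) (by norm_num)
  have hm17 : (-0.06592489:ℝ) ≤ (c0 * (c0 * c2)) * (((1/s0) * (1/s0)) * s2) ∧ (c0 * (c0 * c2)) * (((1/s0) * (1/s0)) * s2) ≤ 0.00031919 :=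
    mul_bnd hm16.1 hm16.2 hm14.1 hm14.2
      (by norm_num) (by norm_num) (by norm_num) (by norm_num)
      (by norm_num) (by norm_num) (by norm_num) (by norm_num)
  have hm18 : (-0.00618743:ℝ) ≤ (c0/s0) * (c2 * (-3 * ((c0/s0) * s2) + 2 * ((c2 * (1/s0)) * (C/S)) - 3)) ∧ (c0/s0) * (c2 * (-3 * ((c0/s0) * s2) + 2 * ((c2 * (1/s0)) * (C/S)) - 3)) ≤ 1.27799373 :=
    mul_bnd hk0.1 hk0.2 hm6.1 hm6.2
      (by norm_num) (by norm_num) (by norm_num) (by norm_num)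
      (by norm_num) (by norm_num) (by norm_num) (by norm_num)
  have hm19 : (-4.97741702:ℝ) ≤ (s2 * (-3 * ((c0/s0) * s2) + 2 * ((c2 * (1/s0)) * (C/S)) - 3)) * s0 ∧ (s2 * (-3 * ((c0/s0) * s2) + 2 * ((c2 * (1/s0)) * (C/S)) - 3)) * s0 ≤ 0.00700821 :=
    mul_bnd hm5.1 hm5.2 hs0.1 hs0.2
      (by norm_num) (by norm_num) (by norm_num) (by norm_num)
      (by norm_num) (by norm_num) (by norm_num) (by norm_num)
  have hm20 : (-0.00395652:ℝ) ≤ ((1/s0) * (1/s0)) * (C/S) ∧ ((1/s0) * (1/s0)) * (C/S) ≤ 0.62316957 :=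
    mul_bnd hm11.1 hm11.2 hk1.1 hk1.2
      (by norm_num) (by norm_num) (by norm_num) (by norm_num)
      (by norm_num) (by norm_num) (by norm_num) (by norm_num)
  have hm21 : (-3.10177483:ℝ) ≤ ((s2 * (-3 * ((c0/s0) * s2) + 2 * ((c2 * (1/s0)) * (C/S)) - 3)) * s0) * (((1/s0) * (1/s0)) * (C/S)) ∧ ((s2 * (-3 * ((c0/s0) * s2) + 2 * ((c2 * (1/s0)) * (C/S)) - 3)) * s0) * (((1/s0) * (1/s0)) * (C/S)) ≤ 0.01969325 :=
    mul_bnd hm19.1 hm19.2 hm20.1 hm20.2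
      (by norm_num) (by norm_num) (by norm_num) (by norm_num)
      (by norm_num) (by norm_num) (by norm_num) (by norm_num)
  have hm22 : (-0.001204:ℝ) ≤ c2 * (c0 * c2) ∧ c2 * (c0 * c2) ≤ 0.24868336 :=
    mul_bnd hc2.1 hc2.2 hm10.1 hm10.2
      (by norm_num) (by norm_num) (by norm_num) (by norm_num)
      (by norm_num) (by norm_num) (by norm_num) (by norm_num)
  have hm23 : (-0.00098393:ℝ) ≤ (c2 * (c0 * c2)) * (((1/s0) * (1/s0)) * (C/S)) ∧ (c2 * (c0 * c2)) * (((1/s0) * (1/s0)) * (C/S)) ≤ 0.15497191 :=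
    mul_bnd hm22.1 hm22.2 hm20.1 hm20.2
      (by norm_num) (by norm_num) (by norm_num) (by norm_num)
      (by norm_num) (by norm_num) (by norm_num) (by norm_num)
  have hm24 : (0.74520056:ℝ) ≤ S * S ∧ S * S ≤ 1.0 :=
    mul_bnd hSS.1 hSS.2 hSS.1 hSS.2
      (by norm_num) (by norm_num) (by norm_num) (by norm_num)
      (by norm_num) (by norm_num) (by norm_num) (by norm_num)
  have hm25 : (-0.00145372:ℝ) ≤ s2 * (1/s0) ∧ s2 * (1/s0) ≤ 1.03247122 :=
    mul_bnd hs2.1 hs2.2 hi0.1 hi0.2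
      (by norm_num) (by norm_num) (by norm_num) (by norm_num)
      (by norm_num) (by norm_num) (by norm_num) (by norm_num)
  have hm26 : (-0.00145372:ℝ) ≤ (S * S) * (s2 * (1/s0)) ∧ (S * S) * (s2 * (1/s0)) ≤ 1.03247122 :=
    mul_bnd hm24.1 hm24.2 hm25.1 hm25.2
      (by norm_num) (by norm_num) (by norm_num) (by norm_num)
      (by norm_num) (by norm_num) (by norm_num) (by norm_num)
  have hm27 : (1.0:ℝ) ≤ (1/S) * (1/S) ∧ (1/S) * (1/S) ≤ 1.34192064 :=
    mul_bnd hj.1 hj.2 hj.1 hj.2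
      (by norm_num) (by norm_num) (by norm_num) (by norm_num)
      (by norm_num) (by norm_num) (by norm_num) (by norm_num)
  have hm28 : (-0.00195078:ℝ) ≤ ((S * S) * (s2 * (1/s0))) * ((1/S) * (1/S)) ∧ ((S * S) * (s2 * (1/s0))) * ((1/S) * (1/S)) ≤ 1.38549445 :=
    mul_bnd hm26.1 hm26.2 hm27.1 hm27.2
      (by norm_num) (by norm_num) (by norm_num) (by norm_num)
      (by norm_num) (by norm_num) (by norm_num) (by norm_num)
  have hm29 : (-1.43048315:ℝ) ≤ (c2 * (1/s0)) * (((S * S) * (s2 * (1/s0))) * ((1/S) * (1/S))) ∧ (c2 * (1/s0)) * (((S * S) * (s2 * (1/s0))) * ((1/S) * (1/S))) ≤ 0.00256988 :=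
    mul_bnd hm2.1 hm2.2 hm28.1 hm28.2
      (by norm_num) (by norm_num) (by norm_num) (by norm_num)
      (by norm_num) (by norm_num) (by norm_num) (by norm_num)
  have hm30 : (-0.00161689:ℝ) ≤ C * C ∧ C * C ≤ 0.25466767 :=
    mul_bnd hCC.1 hCC.2 hCC.1 hCC.2
      (by norm_num) (by norm_num) (by norm_num) (by norm_num)
      (by norm_num) (by norm_num) (by norm_num) (by norm_num)
  have hm31 : (-0.0016694:ℝ) ≤ (C * C) * (s2 * (1/s0)) ∧ (C * C) * (s2 * (1/s0)) ≤ 0.26293704 :=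
    mul_bnd hm30.1 hm30.2 hm25.1 hm25.2
      (by norm_num) (by norm_num) (by norm_num) (by norm_num)
      (by norm_num) (by norm_num) (by norm_num) (by norm_num)
  have hm32 : (-0.00224021:ℝ) ≤ ((C * C) * (s2 * (1/s0))) * ((1/S) * (1/S)) ∧ ((C * C) * (s2 * (1/s0))) * ((1/S) * (1/S)) ≤ 0.35284065 :=
    mul_bnd hm31.1 hm31.2 hm27.1 hm27.2
      (by norm_num) (by norm_num) (by norm_num) (by norm_num)
      (by norm_num) (by norm_num) (by norm_num) (by norm_num)
  have hm33 : (-0.36429782:ℝ) ≤ (c2 * (1/s0)) * (((C * C) * (s2 * (1/s0))) * ((1/S) * (1/S))) ∧ (c2 * (1/s0)) * (((C * C) * (s2 * (1/s0))) * ((1/S) * (1/S))) ≤ 0.00231296 :=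
    mul_bnd hm2.1 hm2.2 hm32.1 hm32.2
      (by norm_num) (by norm_num) (by norm_num) (by norm_num)
      (by norm_num) (by norm_num) (by norm_num) (by norm_num)
  have hl34 : (-7.59860803:ℝ) ≤ 3 * (((s0 * c2) * s0) * (((1/s0) * (1/s0)) * s2)) + 3 * ((c0 * (c0 * c2)) * (((1/s0) * (1/s0)) * s2)) - 3 * ((c0/s0) * (c2 * (-3 * ((c0/s0) * s2) + 2 * ((c2 * (1/s0)) * (C/S)) - 3))) - 2 * (((s2 * (-3 * ((c0/s0) * s2) + 2 * ((c2 * (1/s0)) * (C/S)) - 3)) * s0) * (((1/s0) * (1/s0)) * (C/S))) - 2 * ((c2 * (c0 * c2)) * (((1/s0) * (1/s0)) * (C/S))) - 4 * ((c2 * (1/s0)) * (((S * S) * (s2 * (1/s0))) * ((1/S) * (1/S)))) - 4 * ((c2 * (1/s0)) * (((C * C) * (s2 * (1/s0))) * ((1/S) * (1/S)))) ∧ 3 * (((s0 * c2) * s0) * (((1/s0) * (1/s0)) * s2)) + 3 * ((c0 * (c0 * c2)) * (((1/s0) * (1/s0)) * s2)) - 3 * ((c0/s0) * (c2 * (-3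 * ((c0/s0) * s2) + 2 * ((c2 * (1/s0)) * (C/S)) - 3))) - 2 * (((s2 * (-3 * ((c0/s0) * s2) + 2 * ((c2 * (1/s0)) * (C/S)) - 3)) * s0) * (((1/s0) * (1/s0)) * (C/S))) - 2 * ((c2 * (c0 * c2)) * (((1/s0) * (1/s0)) * (C/S))) - 4 * ((c2 * (1/s0)) * (((S * S) * (s2 * (1/s0))) * ((1/S) * (1/S)))) - 4 * ((c2 * (1/s0)) * (((C * C) * (s2 * (1/s0))) * ((1/S) * (1/S)))) ≤ 13.40990647 := by
    constructor <;> linarith [hm15.1, hm15.2, hm17.1, hm17.2, hm18.1, hm18.2, hm21.1, hm21.2, hm23.1, hm23.2, hm29.1, hm29.2, hm33.1, hm33.2]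
  refine ⟨?_, ?_, ?_⟩
  · rw [abs_lt]; constructor <;> linarith [hm5.1, hm5.2]
  · rw [abs_lt]; constructor <;> linarith [hl9.1, hl9.2]
  · rw [abs_lt]; constructor <;> linarith [hl34.1, hl34.2]

set_option maxHeartbeats 2000000 in
/-- Bounds on the components of `F₁ = (Df)·f`, the derivative of the vector
field along itself, on the open box `U₂`. -/
theorem F1_bounds_on_U2 (u : EuclideanSpace ℝ (Fin 3))
    (h₁ : 33 / 25 < u 0 ∧ u 0 < 393 / 250)
    (h₂ : 521 / 1000 < u 1 ∧ u 1 < 787 / 1000)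
    (h₃ : 1569 / 1000 < u 2 ∧ u 2 < 3143 / 1000) :
    |fderiv ℝ cmcField u (cmcField u) 0| < 4.98 ∧
    |fderiv ℝ cmcField u (cmcField u) 1| < 5.41 ∧
    |fderiv ℝ cmcField u (cmcField u) 2| < 15.26 := by
  obtain ⟨hr1, hr2⟩ := h₁
  obtain ⟨hth1, hth2⟩ := h₂
  obtain ⟨ha1, ha2⟩ := h₃
  have hπ1 : (3.141592:ℝ) < π := Real.pi_gt_d6
  have hπ2 : π < 3.141593 := Real.pi_lt_d6
  have hs0 : (0.96855:ℝ) ≤ sin (u 0) ∧ sin (u 0) ≤ 1 := by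
    constructor
    · have h1 : cos (π/2 - u 0) = sin (u 0) := Real.cos_pi_div_two_sub _
      have h2 := Real.one_sub_sq_div_two_le_cos (x := π/2 - u 0)
      nlinarith [mul_nonneg (by linarith : (0:ℝ) ≤ 0.2507965 - (π/2 - u 0))
        (by linarith : (0:ℝ) ≤ (π/2 - u 0) + 0.001204)]
    · exact Real.sin_le_one _
  have hc0 : (-0.001204:ℝ) ≤ cos (u 0) ∧ cos (u 0) ≤ 0.24868336 := by
    constructor
    · have h1 : sin (π/2 - u 0) = cos (u 0) := Real.sin_pi_div_two_sub _
      rcases le_or_gt 0 (π/2 - u 0) with h | h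
      · have h4 := Real.sin_nonneg_of_nonneg_of_le_pi h (by linarith)
        linarith
      · have h2 := Real.abs_sin_le_abs (x := π/2 - u 0)
        rw [abs_of_neg h] at h2
        have h3 := neg_abs_le (sin (π/2 - u 0))
        linarith
    · have h132 : (33/25:ℝ) = 1.32 := by norm_num
      have hmono : cos (u 0) ≤ cos 1.32 := by
        apply Real.cos_le_cos_of_nonneg_of_le_pi (by norm_num) (by linarith)
        rw [← h132]; linarith
      linarith [chainA]
  have hSS : (0.86325:ℝ) ≤ sin (2 * u 1) ∧ sin (2 * u 1) ≤ 1 := by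
    constructor
    · have h1 : cos (π/2 - 2 * u 1) = sin (2 * u 1) := Real.cos_pi_div_two_sub _
      have h2 : cos (π/2 - 1.042) = sin 1.042 := Real.cos_pi_div_two_sub _
      have h3 : cos (π/2 - 1.042) ≤ cos |π/2 - 2 * u 1| := by
        apply Real.cos_le_cos_of_nonneg_of_le_pi (abs_nonneg _) (by linarith)
        rw [abs_le]
        constructor <;> [linarith; linarith]
      rw [Real.cos_abs] at h3
      linarith [chainB.1]
    · exact Real.sin_le_one _
  have hCC : (-0.003204:ℝ) ≤ cos (2 * u 1) ∧ cos (2 * u 1) ≤ 0.50464608 := by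
    constructor
    · have h1 : sin (π/2 - 2 * u 1) = cos (2 * u 1) := Real.sin_pi_div_two_sub _
      rcases le_or_gt 0 (π/2 - 2 * u 1) with h | h
      · have h4 := Real.sin_nonneg_of_nonneg_of_le_pi h (by linarith)
        linarith
      · have h2 := Real.abs_sin_le_abs (x := π/2 - 2 * u 1)
        rw [abs_of_neg h] at h2
        have h3 := neg_abs_le (sin (π/2 - 2 * u 1))
        linarith
    · have hmono : cos (2 * u 1) ≤ cos 1.042 :=
        Real.cos_le_cos_of_nonneg_of_le_pi (by norm_num) (by linarith) (by linarith)
      linarith [chainB.2]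
  have hs2 : (-0.001408:ℝ) ≤ sin (u 2) ∧ sin (u 2) ≤ 1 := by
    constructor
    · have h1 : sin (π - u 2) = sin (u 2) := Real.sin_pi_sub _
      rcases le_or_gt 0 (π - u 2) with h | h
      · have h4 := Real.sin_nonneg_of_nonneg_of_le_pi h (by linarith)
        linarith
      · have h2 := Real.abs_sin_le_abs (x := π - u 2)
        rw [abs_of_neg h] at h2
        have h3 := neg_abs_le (sin (π - u 2))
        linarith
    · exact Real.sin_le_one _
  have hc2 : (-1:ℝ) ≤ cos (u 2) ∧ cos (u 2) ≤ 0.0017965 := by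
    constructor
    · exact Real.neg_one_le_cos _
    · have h1 : sin (π/2 - u 2) = cos (u 2) := Real.sin_pi_div_two_sub _
      rcases le_or_gt 0 (π/2 - u 2) with h | h
      · have h2 := Real.abs_sin_le_abs (x := π/2 - u 2)
        rw [abs_of_nonneg h] at h2
        have h3 := le_abs_self (sin (π/2 - u 2))
        linarith
      · have h4 := Real.sin_nonpos_of_nonpos_of_neg_pi_le (le_of_lt h) (by linarith)
        linarith
  have hs0pos : (0:ℝ) < sin (u 0) := by linarith [hs0.1]
  have hSpos : (0:ℝ) < sin (2 * u 1) := by linarith [hSS.1]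
  have hne : sin (u 0) ≠ 0 := ne_of_gt hs0pos
  have hneS : sin (2 * u 1) ≠ 0 := ne_of_gt hSpos
  have d0 : DifferentiableAt ℝ (fun w : EuclideanSpace ℝ (Fin 3) => w 0) u :=
    (EuclideanSpace.proj (𝕜 := ℝ) (0 : Fin 3)).differentiableAt
  have d1 : DifferentiableAt ℝ (fun w : EuclideanSpace ℝ (Fin 3) => w 1) u :=
    (EuclideanSpace.proj (𝕜 := ℝ) (1 : Fin 3)).differentiableAt
  have d2 : DifferentiableAt ℝ (fun w : EuclideanSpace ℝ (Fin 3) => w 2) u :=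
    (EuclideanSpace.proj (𝕜 := ℝ) (2 : Fin 3)).differentiableAt
  have ds0 : DifferentiableAt ℝ (fun w : EuclideanSpace ℝ (Fin 3) => sin (w 0)) u := d0.sin
  have dc0 : DifferentiableAt ℝ (fun w : EuclideanSpace ℝ (Fin 3) => cos (w 0)) u := d0.cos
  have ds2 : DifferentiableAt ℝ (fun w : EuclideanSpace ℝ (Fin 3) => sin (w 2)) u := d2.sin
  have dc2 : DifferentiableAt ℝ (fun w : EuclideanSpace ℝ (Fin 3) => cos (w 2)) u := d2.cos
  have d2y : DifferentiableAt ℝ (fun w : EuclideanSpace ℝ (Fin 3) => 2 * w 1) u := d1.const_mul 2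
  have dS : DifferentiableAt ℝ (fun w : EuclideanSpace ℝ (Fin 3) => sin (2 * w 1)) u := d2y.sin
  have dC : DifferentiableAt ℝ (fun w : EuclideanSpace ℝ (Fin 3) => cos (2 * w 1)) u := d2y.cos
  have di0 : DifferentiableAt ℝ (fun w : EuclideanSpace ℝ (Fin 3) => (sin (w 0))⁻¹) u :=
    ds0.inv hne
  have diS : DifferentiableAt ℝ (fun w : EuclideanSpace ℝ (Fin 3) => (sin (2 * w 1))⁻¹) u :=
    dS.inv hneS
  have dq1 : DifferentiableAt ℝ (fun w : EuclideanSpace ℝ (Fin 3) => sin (w 2) * (sin (w 0))⁻¹) u :=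
    ds2.mul di0
  have dq2 : DifferentiableAt ℝ (fun w : EuclideanSpace ℝ (Fin 3) => cos (w 0) * (sin (w 0))⁻¹) u :=
    dc0.mul di0
  have dq3 : DifferentiableAt ℝ (fun w : EuclideanSpace ℝ (Fin 3) => cos (w 2) * (sin (w 0))⁻¹) u :=
    dc2.mul di0
  have dq4 : DifferentiableAt ℝ
      (fun w : EuclideanSpace ℝ (Fin 3) => cos (2 * w 1) * (sin (2 * w 1))⁻¹) u := dC.mul diS
  have dq5 : DifferentiableAt ℝ
      (fun w : EuclideanSpace ℝ (Fin 3) => -3 * (cos (w 0) * (sin (w 0))⁻¹) * sin (w 2)) u :=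
    (dq2.const_mul (-3)).mul ds2
  have dq6 : DifferentiableAt ℝ
      (fun w : EuclideanSpace ℝ (Fin 3) =>
        2 * (cos (w 2) * (sin (w 0))⁻¹) * (cos (2 * w 1) * (sin (2 * w 1))⁻¹)) u :=
    (dq3.const_mul 2).mul dq4
  have hd : DifferentiableAt ℝ cmcField u := by
    rw [differentiableAt_euclidean]
    intro i
    fin_cases i
    · exact dc2
    · exact dq1
    · exact (dq5.add dq6).sub_const 3
  set v := cmcField u with hvdef
  have hv0 : v 0 = cos (u 2) := rfl
  have hv1 : v 1 = sin (u 2) / sin (u 0) := rfl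
  have hv2 : v 2 = -3 * (cos (u 0) / sin (u 0)) * sin (u 2)
      + 2 * (cos (u 2) / sin (u 0)) * (cos (2 * u 1) / sin (2 * u 1)) - 3 := rfl
  have hline : HasDerivAt (fun t : ℝ => u + t • v) v 0 := by
    simpa using ((hasDerivAt_id (0:ℝ)).smul_const v).const_add u
  have hF : HasFDerivAt cmcField (fderiv ℝ cmcField u) (u + (0:ℝ) • v) := by
    simpa using hd.hasFDerivAt
  have hcurve : HasDerivAt (fun t : ℝ => cmcField (u + t • v)) (fderiv ℝ cmcField u v) 0 :=
    HasFDerivAt.comp_hasDerivAt (l := cmcField) (f := fun t : ℝ => u + t • v) 0 hF hline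
  have hproj : ∀ j : Fin 3, HasDerivAt (fun t : ℝ => cmcField (u + t • v) j)
      (fderiv ℝ cmcField u v j) 0 := by
    intro j
    have h2 := (EuclideanSpace.proj (𝕜 := ℝ) j).hasFDerivAt.comp_hasDerivAt 0 hcurve
    simpa [Function.comp_def] using h2
  have hne0' : sin (u 0 + (0:ℝ) * v 0) ≠ 0 := by simpa using hne
  have hneS' : sin (2 * (u 1 + (0:ℝ) * v 1)) ≠ 0 := by simpa using hneS
  have hb0 : HasDerivAt (fun t : ℝ => u 0 + t * v 0) (v 0) 0 :=
    (hasDerivAt_mul_const (v 0)).const_add (u 0)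
  have hb1 : HasDerivAt (fun t : ℝ => u 1 + t * v 1) (v 1) 0 :=
    (hasDerivAt_mul_const (v 1)).const_add (u 1)
  have hb2 : HasDerivAt (fun t : ℝ => u 2 + t * v 2) (v 2) 0 :=
    (hasDerivAt_mul_const (v 2)).const_add (u 2)
  have h2y : HasDerivAt (fun t : ℝ => 2 * (u 1 + t * v 1)) (2 * v 1) 0 := hb1.const_mul 2
  have hcoord : ∀ t : ℝ, ∀ j : Fin 3, (u + t • v) j = u j + t * v j := by
    intro t j
    simp [PiLp.add_apply, PiLp.smul_apply, smul_eq_mul]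
  have hfun0 : (fun t : ℝ => cmcField (u + t • v) 0) = (fun t : ℝ => cos (u 2 + t * v 2)) := by
    funext t
    show cos ((u + t • v) 2) = cos (u 2 + t * v 2)
    rw [hcoord t 2]
  have hfun1 : (fun t : ℝ => cmcField (u + t • v) 1)
      = (fun t : ℝ => sin (u 2 + t * v 2) / sin (u 0 + t * v 0)) := by
    funext t
    show sin ((u + t • v) 2) / sin ((u + t • v) 0) = _
    rw [hcoord t 2, hcoord t 0]
  have hfun2 : (fun t : ℝ => cmcField (u + t • v) 2)
      = (fun t : ℝ => -3 * (cos (u 0 + t * v 0) / sin (u 0 + t * v 0)) * sin (u 2 + t * v 2)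
          + 2 * (cos (u 2 + t * v 2) / sin (u 0 + t * v 0))
            * (cos (2 * (u 1 + t * v 1)) / sin (2 * (u 1 + t * v 1))) - 3) := by
    funext t
    show -3 * (cos ((u + t • v) 0) / sin ((u + t • v) 0)) * sin ((u + t • v) 2)
        + 2 * (cos ((u + t • v) 2) / sin ((u + t • v) 0))
          * (cos (2 * ((u + t • v) 1)) / sin (2 * ((u + t • v) 1))) - 3 = _
    rw [hcoord t 0, hcoord t 1, hcoord t 2]
  have hx0 : HasDerivAt (fun t : ℝ => cmcField (u + t • v) 0) (-sin (u 2) * v 2) 0 := by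
    rw [hfun0]
    have H0 := hb2.cos
    simpa using H0
  have hx1 : HasDerivAt (fun t : ℝ => cmcField (u + t • v) 1)
      ((cos (u 2) * v 2 * sin (u 0) - sin (u 2) * (cos (u 0) * v 0)) / sin (u 0) ^ 2) 0 := by
    rw [hfun1]
    have H1 := (hb2.sin).div (hb0.sin) hne0'
    exact H1.congr_deriv (by simp)
  have hx2 : HasDerivAt (fun t : ℝ => cmcField (u + t • v) 2)
      (-3 * ((-sin (u 0) * v 0 * sin (u 0) - cos (u 0) * (cos (u 0) * v 0)) / sin (u 0) ^ 2)
          * sin (u 2)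
        + -3 * (cos (u 0) / sin (u 0)) * (cos (u 2) * v 2)
        + (2 * ((-sin (u 2) * v 2 * sin (u 0) - cos (u 2) * (cos (u 0) * v 0)) / sin (u 0) ^ 2)
            * (cos (2 * u 1) / sin (2 * u 1))
          + 2 * (cos (u 2) / sin (u 0))
            * ((-sin (2 * u 1) * (2 * v 1) * sin (2 * u 1)
                - cos (2 * u 1) * (cos (2 * u 1) * (2 * v 1))) / sin (2 * u 1) ^ 2))) 0 := by
    rw [hfun2]
    have hq0 := (hb0.cos).div (hb0.sin) hne0'
    have H2 := (((hq0.const_mul (-3)).mul hb2.sin).add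
      (((hb2.cos.div hb0.sin hne0').const_mul 2).mul ((h2y.cos).div h2y.sin hneS'))).sub_const 3
    simpa using H2
  have hEq0 : fderiv ℝ cmcField u v 0 = -sin (u 2) * v 2 := (hproj 0).unique hx0
  have hEq1 : fderiv ℝ cmcField u v 1
      = (cos (u 2) * v 2 * sin (u 0) - sin (u 2) * (cos (u 0) * v 0)) / sin (u 0) ^ 2 :=
    (hproj 1).unique hx1
  have hEq2 : fderiv ℝ cmcField u v 2
      = -3 * ((-sin (u 0) * v 0 * sin (u 0) - cos (u 0) * (cos (u 0) * v 0)) / sin (u 0) ^ 2)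
          * sin (u 2)
        + -3 * (cos (u 0) / sin (u 0)) * (cos (u 2) * v 2)
        + (2 * ((-sin (u 2) * v 2 * sin (u 0) - cos (u 2) * (cos (u 0) * v 0)) / sin (u 0) ^ 2)
            * (cos (2 * u 1) / sin (2 * u 1))
          + 2 * (cos (u 2) / sin (u 0))
            * ((-sin (2 * u 1) * (2 * v 1) * sin (2 * u 1)
                - cos (2 * u 1) * (cos (2 * u 1) * (2 * v 1))) / sin (2 * u 1) ^ 2)) :=
    (hproj 2).unique hx2
  obtain ⟨B1, B2, B3⟩ := boundsLemma (sin (u 0)) (cos (u 0)) (sin (2 * u 1)) (cos (2 * u 1))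
    (sin (u 2)) (cos (u 2)) hs0 hc0 hSS hCC hs2 hc2
  refine ⟨?_, ?_, ?_⟩
  · rw [hEq0, hv2]
    convert B1 using 2
    ring
  · rw [hEq1, hv0, hv2]
    convert B2 using 2
    field_simp
  · rw [hEq2, hv0, hv1, hv2]
    convert B3 using 2
    field_simp
    ring
end
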